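/- Let N, E ∈ ℕ, let A_p and A_high be diagonal N×N real matrices whose diagonal entries all lie in the open interval (0,1), with A_p ⪯ A_high in the Loewner order, and let B be an N×E real matrix. Then ‖((A_p - I)^2 + B*Bᵀ)⁻¹‖ ≤ ‖((A_high - I)^2 + B*Bᵀ)⁻¹‖, where ‖·‖ denotes the spectral norm (the ℓ2-induced operator norm) and both matrices (A_p - I)^2 + B*Bᵀ and (A_high - I)^2 + B*Bᵀ are positive definite, hence invertible. -/

import Mathlib

open Matrix
open scoped Matrix.Norms.L2Operator

set_option maxHeartbeats 1000000

section Aux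

variable {n : Type*} [Fintype n] [DecidableEq n]

open scoped MatrixOrder in
noncomputable def Matrix.PosSemidef.sqrt {X : Matrix n n ℝ} (_hX : X.PosSemidef) :
    Matrix n n ℝ := CFC.sqrt X

open scoped MatrixOrder in
lemma Matrix.PosSemidef.posSemidef_sqrt {X : Matrix n n ℝ} (hX : X.PosSemidef) :
    hX.sqrt.PosSemidef := (CFC.sqrt_nonneg X).posSemidef

open scoped MatrixOrder in
lemma Matrix.PosSemidef.sqrt_mul_self {X : Matrix n n ℝ} (hX : X.PosSemidef) :
    hX.sqrt * hX.sqrt = X := CFC.sqrt_mul_sqrt_self X hX.nonneg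

omit [DecidableEq n] in
lemma euclid_norm_sq (v : n → ℝ) :
    ‖(EuclideanSpace.equiv n ℝ).symm v‖ ^ 2 = v ⬝ᵥ v := by
  rw [← real_inner_self_eq_norm_sq]
  simp [EuclideanSpace.equiv, EuclideanSpace.norm_sq_eq, dotProduct, ← sq]

lemma dot_sq_eq {X : Matrix n n ℝ} (hX : X.PosSemidef) (x : n → ℝ) :
    x ⬝ᵥ (X *ᵥ x) = (hX.sqrt *ᵥ x) ⬝ᵥ (hX.sqrt *ᵥ x) := by
  have hsym : hX.sqrt ᵀ = hX.sqrt := by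
    have := hX.posSemidef_sqrt.isHermitian
    simpa [Matrix.IsHermitian, conjTranspose_eq_transpose_of_trivial] using this
  conv_lhs => rw [← hX.sqrt_mul_self]
  rw [← mulVec_mulVec, dotProduct_mulVec, ← mulVec_transpose, hsym]

lemma norm_psd_sq {X : Matrix n n ℝ} (hX : X.PosSemidef) :
    ‖X‖ = ‖hX.sqrt‖ * ‖hX.sqrt‖ := by
  conv_lhs => rw [← hX.sqrt_mul_self]
  nth_rewrite 1 [← hX.posSemidef_sqrt.isHermitian.eq]
  exact l2_opNorm_conjTranspose_mul_self _

/-- Monotonicity of the spectral norm with respect to the Loewner order on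
positive semidefinite real matrices. -/
lemma l2_norm_mono {X Y : Matrix n n ℝ} (hX : X.PosSemidef) (hY : Y.PosSemidef)
    (h : (Y - X).PosSemidef) : ‖X‖ ≤ ‖Y‖ := by
  have hdot : ∀ x : n → ℝ, x ⬝ᵥ (X *ᵥ x) ≤ x ⬝ᵥ (Y *ᵥ x) := by
    intro x
    have := h.dotProduct_mulVec_nonneg x
    simp only [star_trivial, sub_mulVec, dotProduct_sub] at this
    linarith
  have hST : ‖hX.sqrt‖ ≤ ‖hY.sqrt‖ := by
    rw [l2_opNorm_def]
    refine ContinuousLinearMap.opNorm_le_bound _ (norm_nonneg _) fun x => ?_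
    show ‖(EuclideanSpace.equiv n ℝ).symm (hX.sqrt *ᵥ x)‖ ≤ ‖hY.sqrt‖ * ‖x‖
    have key : ‖(EuclideanSpace.equiv n ℝ).symm (hX.sqrt *ᵥ x)‖ ^ 2
        ≤ (‖hY.sqrt‖ * ‖x‖) ^ 2 := by
      rw [euclid_norm_sq, ← dot_sq_eq hX x]
      calc (x : n → ℝ) ⬝ᵥ (X *ᵥ x) ≤ x ⬝ᵥ (Y *ᵥ x) := hdot x
        _ = ‖(EuclideanSpace.equiv n ℝ).symm (hY.sqrt *ᵥ x)‖ ^ 2 := by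
            rw [euclid_norm_sq, dot_sq_eq hY x]
        _ ≤ (‖hY.sqrt‖ * ‖x‖) ^ 2 :=
            pow_le_pow_left₀ (norm_nonneg _) (hY.sqrt.l2_opNorm_mulVec x) 2
    have h2 : (0:ℝ) ≤ ‖hY.sqrt‖ * ‖x‖ := by positivity
    exact (pow_le_pow_iff_left₀ (norm_nonneg _) h2 two_ne_zero).mp key
  rw [norm_psd_sq hX, norm_psd_sq hY]
  exact mul_le_mul hST hST (norm_nonneg _) (norm_nonneg _)

lemma sqrt_isUnit {X : Matrix n n ℝ} (hX : X.PosSemidef) (h : IsUnit X) :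
    IsUnit hX.sqrt := by
  rw [Matrix.isUnit_iff_isUnit_det] at h ⊢
  rw [← hX.sqrt_mul_self, Matrix.det_mul] at h
  exact isUnit_mul_self_iff.mp h

/-- Antitonicity of matrix inversion with respect to the Loewner order on
positive definite real matrices. -/
lemma inv_antitone {X Y : Matrix n n ℝ} (hX : X.PosDef) (hY : Y.PosDef)
    (h : (X - Y).PosSemidef) : (Y⁻¹ - X⁻¹).PosSemidef := by
  have hYu : IsUnit Y := hY.isUnit
  have hXu : IsUnit X := hX.isUnit
  have hYd : IsUnit Y.det := (Matrix.isUnit_iff_isUnit_det Y).mp hYu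
  have hYinv : Y⁻¹.PosDef := hY.inv
  set T : Matrix n n ℝ := hYinv.posSemidef.sqrt with hTdef
  have hT : T.PosSemidef := hYinv.posSemidef.posSemidef_sqrt
  have hTh : Tᴴ = T := hT.isHermitian.eq
  have hTsq : T * T = Y⁻¹ := hYinv.posSemidef.sqrt_mul_self
  have hTu : IsUnit T := sqrt_isUnit hYinv.posSemidef hYinv.isUnit
  have hTd : IsUnit T.det := (Matrix.isUnit_iff_isUnit_det T).mp hTu
  have hTYT : T * Y * T = 1 := by
    have hPu : IsUnit (T * Y * T) := (hTu.mul hYu).mul hTu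
    refine hPu.mul_left_cancel ?_
    rw [mul_one]
    calc (T * Y * T) * (T * Y * T) = T * (Y * ((T * T) * Y)) * T := by
          simp only [Matrix.mul_assoc]
      _ = T * Y * T := by
          rw [hTsq, Matrix.nonsing_inv_mul Y hYd, mul_one]
  set M : Matrix n n ℝ := T * X * T with hMdef
  have hMpsd : M.PosSemidef := by
    have := hX.posSemidef.conjTranspose_mul_mul_same T
    rwa [hTh] at this
  have hMu : IsUnit M := (hTu.mul hXu).mul hTu
  have hMd : IsUnit M.det := (Matrix.isUnit_iff_isUnit_det M).mp hMu
  have hM1 : (M - 1).PosSemidef := by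
    have := h.conjTranspose_mul_mul_same T
    rwa [hTh, Matrix.mul_sub, Matrix.sub_mul, hTYT, ← hMdef] at this
  set U : Matrix n n ℝ := hMpsd.sqrt with hUdef
  have hU : U.PosSemidef := hMpsd.posSemidef_sqrt
  have hUh : Uᴴ = U := hU.isHermitian.eq
  have hUsq : U * U = M := hMpsd.sqrt_mul_self
  have hUu : IsUnit U := sqrt_isUnit hMpsd hMu
  have hUd : IsUnit U.det := (Matrix.isUnit_iff_isUnit_det U).mp hUu
  have step : (1 - M⁻¹).PosSemidef := by
    have h2 := hM1.conjTranspose_mul_mul_same U⁻¹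
    rw [Matrix.conjTranspose_nonsing_inv, hUh] at h2
    have e1 : U⁻¹ * M * U⁻¹ = 1 := by
      rw [← hUsq, ← Matrix.mul_assoc, Matrix.nonsing_inv_mul U hUd, one_mul,
        Matrix.mul_nonsing_inv U hUd]
    have e2 : U⁻¹ * (M - 1) * U⁻¹ = 1 - M⁻¹ := by
      rw [Matrix.mul_sub, Matrix.sub_mul, e1, mul_one, ← Matrix.mul_inv_rev, hUsq]
    rwa [e2] at h2
  have final := step.conjTranspose_mul_mul_same T
  rw [hTh] at final
  have e3 : T * (1 - M⁻¹) * T = Y⁻¹ - X⁻¹ := by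
    have e4 : M⁻¹ = T⁻¹ * X⁻¹ * T⁻¹ := by
      rw [hMdef, Matrix.mul_inv_rev, Matrix.mul_inv_rev, Matrix.mul_assoc]
    rw [Matrix.mul_sub, Matrix.sub_mul, mul_one, hTsq, e4]
    congr 1
    rw [← Matrix.mul_assoc, ← Matrix.mul_assoc, Matrix.mul_nonsing_inv T hTd, one_mul,
      Matrix.mul_assoc, Matrix.nonsing_inv_mul T hTd, mul_one]
  rwa [e3] at final

/-- A diagonal matrix minus the identity, squared, is the diagonal matrix of the
squared shifted diagonal entries. -/
lemma diag_sub_one_sq {A : Matrix n n ℝ} (hd : A.IsDiag) :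
    (A - 1) ^ 2 = diagonal (fun i => (A i i - 1) ^ 2) := by
  conv_lhs => rw [← hd.diagonal_diag, ← diagonal_one]
  rw [diagonal_sub, diagonal_pow]
  congr 1

end Aux

/-- Lemma 2 of the paper: For diagonal matrices `A_p ⪯ A_high` with entries
in `(0,1)` and any `N×E` matrix `B`, both `(A_p - I)² + B Bᵀ` and `(A_high - I)² + B Bᵀ`
are positive definite (hence invertible) and the spectral norms of their inverses satisfy
`‖((A_p - I)² + B Bᵀ)⁻¹‖ ≤ ‖((A_high - I)² + B Bᵀ)⁻¹‖`. -/
theorem l2_gain_lower_bound_monotone (N E : ℕ)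
    (Ap Ahigh : Matrix (Fin N) (Fin N) ℝ)
    (hdp : Ap.IsDiag) (hdh : Ahigh.IsDiag)
    (hAp : ∀ i, 0 < Ap i i ∧ Ap i i < 1)
    (hAh : ∀ i, 0 < Ahigh i i ∧ Ahigh i i < 1)
    (hle : (Ahigh - Ap).PosSemidef)
    (B : Matrix (Fin N) (Fin E) ℝ) :
    ((Ap - 1) ^ 2 + B * Bᵀ).PosDef ∧ ((Ahigh - 1) ^ 2 + B * Bᵀ).PosDef ∧
    IsUnit ((Ap - 1) ^ 2 + B * Bᵀ) ∧ IsUnit ((Ahigh - 1) ^ 2 + B * Bᵀ) ∧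
    ‖((Ap - 1) ^ 2 + B * Bᵀ)⁻¹‖ ≤ ‖((Ahigh - 1) ^ 2 + B * Bᵀ)⁻¹‖ := by
  have hBBt : (B * Bᵀ).PosSemidef := by
    have := posSemidef_self_mul_conjTranspose B
    rwa [conjTranspose_eq_transpose_of_trivial] at this
  have hp2 : (Ap - 1) ^ 2 = diagonal (fun i => (Ap i i - 1) ^ 2) := diag_sub_one_sq hdp
  have hh2 : (Ahigh - 1) ^ 2 = diagonal (fun i => (Ahigh i i - 1) ^ 2) := diag_sub_one_sq hdh
  have hpPD : ((Ap - 1) ^ 2).PosDef := by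
    rw [hp2]
    refine Matrix.PosDef.diagonal fun i => ?_
    have h : (0:ℝ) < 1 - Ap i i := by linarith [(hAp i).2]
    nlinarith [mul_pos h h]
  have hhPD : ((Ahigh - 1) ^ 2).PosDef := by
    rw [hh2]
    refine Matrix.PosDef.diagonal fun i => ?_
    have h : (0:ℝ) < 1 - Ahigh i i := by linarith [(hAh i).2]
    nlinarith [mul_pos h h]
  have hMp : ((Ap - 1) ^ 2 + B * Bᵀ).PosDef := hpPD.add_posSemidef hBBt
  have hMh : ((Ahigh - 1) ^ 2 + B * Bᵀ).PosDef := hhPD.add_posSemidef hBBt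
  refine ⟨hMp, hMh, hMp.isUnit, hMh.isUnit, ?_⟩
  -- entrywise comparison of the diagonal realisations
  have hij : ∀ i, Ap i i ≤ Ahigh i i := by
    intro i
    have h0 := hle.dotProduct_mulVec_nonneg (Pi.single i 1)
    simp only [star_trivial, sub_mulVec, dotProduct_sub, dotProduct_mulVec] at h0
    have h1 : Pi.single (M := fun _ => ℝ) i 1 ⬝ᵥ (Ahigh *ᵥ Pi.single i 1) = Ahigh i i := by
      simp [dotProduct_single, mulVec_single_one, mulVec]
    have h2 : Pi.single (M := fun _ => ℝ) i 1 ⬝ᵥ (Ap *ᵥ Pi.single i 1) = Ap i i := by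
      simp [dotProduct_single, mulVec_single_one, mulVec]
    have h0' := hle.dotProduct_mulVec_nonneg (Pi.single i 1)
    simp only [star_trivial, sub_mulVec, dotProduct_sub, h1, h2] at h0'
    linarith
  -- Loewner comparison of the two positive definite matrices
  have hsub : (((Ap - 1) ^ 2 + B * Bᵀ) - ((Ahigh - 1) ^ 2 + B * Bᵀ)).PosSemidef := by
    have hdiag : (((Ap - 1) ^ 2 + B * Bᵀ) - ((Ahigh - 1) ^ 2 + B * Bᵀ))
        = diagonal (fun i => (Ap i i - 1) ^ 2 - (Ahigh i i - 1) ^ 2) := by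
      rw [add_sub_add_right_eq_sub, hp2, hh2, diagonal_sub]
    rw [hdiag]
    refine Matrix.PosSemidef.diagonal fun i => ?_
    show (0:ℝ) ≤ (Ap i i - 1) ^ 2 - (Ahigh i i - 1) ^ 2
    have h1 := (hAp i).1
    have h2 := (hAh i).2
    have h3 := hij i
    nlinarith
  have hinv := inv_antitone hMp hMh hsub
  exact l2_norm_mono hMp.inv.posSemidef hMh.inv.posSemidef hinv
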